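/- D is a bounded factorization domain (BFD) if and only if both of the following hold: (i) for every nonzero nonunit a ∈ D there exists N ∈ ℕ such that every chain a = a₀, a₁, …, aₙ from a has n ≤ N; and (ii) every nonzero nonunit b ∈ D that cannot be written as b = ξc with ξ ∈ D irreducible and c ∈ D a nonzero nonunit is itself irreducible. -/

import Mathlib

/-- A chain from a nonzero nonunit `a` : a finite sequence `a = f 0, f 1, …, f n` of
nonzero nonunit elements of `D` such that for `1 ≤ i ≤ n` the quotient `f (i-1) / f i`
lies in `D` and is irreducible, i.e. `f (i-1) = π * f i` for some irreducible `π`. -/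
def IsChainFrom (D : Type*) [CommRing D] (a : D) (n : ℕ) (f : ℕ → D) : Prop :=
  f 0 = a ∧ (∀ i ≤ n, f i ≠ 0 ∧ ¬ IsUnit (f i)) ∧
    ∀ i, 1 ≤ i → i ≤ n → ∃ π : D, Irreducible π ∧ f (i - 1) = π * f i

section Aux
variable {D : Type*} [CommRing D] [IsDomain D]

lemma irred_prod_ne_zero {l : List D} (h : ∀ p ∈ l, Irreducible p) : l.prod ≠ 0 :=
  List.prod_ne_zero (fun h0 => (h 0 h0).ne_zero rfl)

lemma irred_prod_not_unit {l : List D} (hne : l ≠ []) (h : ∀ p ∈ l, Irreducible p) :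
    ¬ IsUnit l.prod := by
  cases l with
  | nil => exact absurd rfl hne
  | cons p t =>
    rw [List.prod_cons]
    intro hu
    exact (h p List.mem_cons_self).not_isUnit (isUnit_of_mul_isUnit_left hu)

lemma chain_prod {a : D} : ∀ (n : ℕ) (f : ℕ → D), IsChainFrom D a n f →
    ∃ l : List D, (∀ p ∈ l, Irreducible p) ∧ l.length = n ∧ a = l.prod * f n := by
  intro n
  induction n with
  | zero => intro f hf; exact ⟨[], by simp, rfl, by simp [hf.1.symm]⟩
  | succ n ih =>
    intro f hf
    obtain ⟨h0, hnz, hq⟩ := hf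
    obtain ⟨l, hl, hlen, ha⟩ := ih f ⟨h0, fun i hi => hnz i (hi.trans (Nat.le_succ n)),
      fun i h1 h2 => hq i h1 (h2.trans (Nat.le_succ n))⟩
    obtain ⟨π, hπ, heq⟩ := hq (n+1) (by omega) le_rfl
    simp only [Nat.add_sub_cancel] at heq
    refine ⟨l ++ [π], ?_, by simp [hlen], ?_⟩
    · intro p hp
      rcases List.mem_append.1 hp with h | h
      · exact hl p h
      · rw [List.mem_singleton.1 h]; exact hπ
    · rw [List.prod_append, List.prod_singleton, ha, heq]; ring

lemma chain_of_list {a : D} {l : List D} (hne : l ≠ []) (hl : ∀ p ∈ l, Irreducible p)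
    (ha : a = l.prod) : IsChainFrom D a (l.length - 1) (fun i => (l.drop i).prod) := by
  have hpos : 0 < l.length := List.length_pos_iff.2 hne
  refine ⟨by simp [ha], ?_, ?_⟩
  · intro i hi
    have hlt : i < l.length := by omega
    have hne' : l.drop i ≠ [] := by
      intro h
      have := List.drop_eq_nil_iff.1 h
      omega
    exact ⟨irred_prod_ne_zero (fun p hp => hl p (List.mem_of_mem_drop hp)),
      irred_prod_not_unit hne' (fun p hp => hl p (List.mem_of_mem_drop hp))⟩
  · intro i h1 h2
    have hlt : i - 1 < l.length := by omega
    refine ⟨l.get ⟨i-1, hlt⟩, hl _ (List.get_mem ..), ?_⟩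
    simp only []
    rw [List.drop_eq_getElem_cons hlt, List.prod_cons]
    have : i - 1 + 1 = i := by omega
    rw [this]
    rfl

lemma chain_extend {a ξ c : D} (hξ : Irreducible ξ) (ha : a = ξ * c)
    (h0 : a ≠ 0) (hu : ¬ IsUnit a) {n : ℕ} {f : ℕ → D} (hf : IsChainFrom D c n f) :
    IsChainFrom D a (n+1) (fun i => if i = 0 then a else f (i-1)) := by
  obtain ⟨hc0, hnz, hq⟩ := hf
  refine ⟨by simp, ?_, ?_⟩
  · intro i hi
    by_cases h : i = 0
    · simp [h, h0, hu]
    · simp only [if_neg h]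
      exact hnz (i-1) (by omega)
  · intro i h1 h2
    by_cases h : i = 1
    · subst h
      exact ⟨ξ, hξ, by simp [hc0, ha]⟩
    · obtain ⟨π, hπ, heq⟩ := hq (i-1) (by omega) (by omega)
      refine ⟨π, hπ, ?_⟩
      simp only [if_neg (by omega : i - 1 ≠ 0), if_neg (by omega : i ≠ 0)]
      exact heq

lemma trivial_chain {c : D} (hc0 : c ≠ 0) (hcu : ¬ IsUnit c) :
    IsChainFrom D c 0 (fun _ => c) :=
  ⟨rfl, fun i hi => ⟨hc0, hcu⟩, fun i h1 h2 => by omega⟩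

lemma atomic_of_bound
    (hii : ∀ b : D, b ≠ 0 → ¬ IsUnit b →
      (¬ ∃ ξ c : D, Irreducible ξ ∧ c ≠ 0 ∧ ¬ IsUnit c ∧ b = ξ * c) → Irreducible b) :
    ∀ N : ℕ, ∀ a : D, a ≠ 0 → ¬ IsUnit a →
      (∀ (n : ℕ) (f : ℕ → D), IsChainFrom D a n f → n ≤ N) →
      ∃ l : List D, l ≠ [] ∧ (∀ p ∈ l, Irreducible p) ∧ a = l.prod := by
  intro N
  induction N with
  | zero =>
    intro a h0 hu hb
    by_cases hd : ∃ ξ c : D, Irreducible ξ ∧ c ≠ 0 ∧ ¬ IsUnit c ∧ a = ξ * c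
    · obtain ⟨ξ, c, hξ, hc0, hcu, ha⟩ := hd
      have := hb 1 _ (chain_extend hξ ha h0 hu (trivial_chain hc0 hcu))
      omega
    · exact ⟨[a], by simp, fun p hp => by rw [List.mem_singleton.1 hp]; exact hii a h0 hu hd,
        by simp⟩
  | succ N ih =>
    intro a h0 hu hb
    by_cases hd : ∃ ξ c : D, Irreducible ξ ∧ c ≠ 0 ∧ ¬ IsUnit c ∧ a = ξ * c
    · obtain ⟨ξ, c, hξ, hc0, hcu, ha⟩ := hd
      obtain ⟨l, hlne, hl, hc⟩ := ih c hc0 hcu (fun n f hf => by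
        have := hb (n+1) _ (chain_extend hξ ha h0 hu hf)
        omega)
      refine ⟨ξ :: l, by simp, ?_, by rw [ha, hc, List.prod_cons]⟩
      intro p hp
      rcases List.mem_cons.1 hp with h | h
      · rw [h]; exact hξ
      · exact hl p h
    · exact ⟨[a], by simp, fun p hp => by rw [List.mem_singleton.1 hp]; exact hii a h0 hu hd,
        by simp⟩

end Aux

/-- `D` is a bounded factorization domain (atomic with bounded factorization lengths)
iff (i) for every nonzero nonunit `a` there is a uniform bound on the lengths of chains
from `a`, and (ii) every nonzero nonunit `b` which cannot be written `b = ξ * c` with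
`ξ` irreducible and `c` a nonzero nonunit is itself irreducible. -/
theorem bfd_iff_bounded_paths (D : Type*) [CommRing D] [IsDomain D] :
    ((∀ a : D, a ≠ 0 → ¬ IsUnit a →
        ∃ l : List D, l ≠ [] ∧ (∀ p ∈ l, Irreducible p) ∧ a = l.prod) ∧
      (∀ a : D, a ≠ 0 → ¬ IsUnit a →
        ∃ N : ℕ, ∀ l : List D, (∀ p ∈ l, Irreducible p) → a = l.prod → l.length ≤ N)) ↔
      ((∀ a : D, a ≠ 0 → ¬ IsUnit a →
          ∃ N : ℕ, ∀ (n : ℕ) (f : ℕ → D), IsChainFrom D a n f → n ≤ N) ∧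
        (∀ b : D, b ≠ 0 → ¬ IsUnit b →
          (¬ ∃ ξ c : D, Irreducible ξ ∧ c ≠ 0 ∧ ¬ IsUnit c ∧ b = ξ * c) →
          Irreducible b)) := by
  constructor
  · rintro ⟨hat, hbd⟩
    constructor
    · intro a h0 hu
      obtain ⟨N, hN⟩ := hbd a h0 hu
      refine ⟨N, fun n f hf => ?_⟩
      obtain ⟨l, hl, hlen, ha⟩ := chain_prod n f hf
      obtain ⟨hfn0, hfnu⟩ := hf.2.1 n le_rfl
      obtain ⟨l', hl'ne, hl', hfn⟩ := hat (f n) hfn0 hfnu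
      have hlen' := hN (l ++ l') (fun p hp => by
        rcases List.mem_append.1 hp with h | h
        · exact hl p h
        · exact hl' p h) (by rw [List.prod_append, ← hfn, ha])
      rw [List.length_append, hlen] at hlen'
      have : 0 < l'.length := List.length_pos_iff.2 hl'ne
      omega
    · intro b h0 hu hd
      obtain ⟨l, hlne, hl, hb⟩ := hat b h0 hu
      match l, hlne with
      | [p], _ => rw [hb, List.prod_singleton]; exact hl p (by simp)
      | p :: q :: t, _ =>
        exfalso
        apply hd
        refine ⟨p, (q :: t).prod, hl p (by simp), ?_, ?_, by rw [hb, List.prod_cons]⟩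
        · exact irred_prod_ne_zero (fun x hx => hl x (List.mem_cons_of_mem _ hx))
        · exact irred_prod_not_unit (by simp) (fun x hx => hl x (List.mem_cons_of_mem _ hx))
  · rintro ⟨hch, hii⟩
    constructor
    · intro a h0 hu
      obtain ⟨N, hN⟩ := hch a h0 hu
      exact atomic_of_bound hii N a h0 hu hN
    · intro a h0 hu
      obtain ⟨N, hN⟩ := hch a h0 hu
      refine ⟨N + 1, fun l hl ha => ?_⟩
      have hlne : l ≠ [] := by
        rintro rfl
        exact hu (by rw [ha, List.prod_nil]; exact isUnit_one)
      have := hN _ _ (chain_of_list hlne hl ha)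
      have : 0 < l.length := List.length_pos_iff.2 hlne
      omega
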